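/- Let E be a semilattice with zero and let ψ be an ultra-character on E (a character whose support is a maximal filter). Then the collection of sets D_e = {φ ∈ Ê_tight : φ(e) = 1}, where e ranges over the support of ψ, forms a neighborhood basis for ψ in the tight spectrum Ê_tight. -/

import Mathlib

/-- A finite subset `C` is a cover for `f`: every `c ∈ C` satisfies `c ≤ f` and every
nonzero `g ≤ f` meets some `c ∈ C`. -/
def IsCover {E : Type*} [SemilatticeInf E] [OrderBot E] (C : Finset E) (f : E) : Prop :=
  (∀ c ∈ C, c ≤ f) ∧ ∀ g : E, g ≠ ⊥ → g ≤ f → ∃ c ∈ C, g ⊓ c ≠ ⊥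

/-- The (finite) family `{v i : i ∈ C}` is a cover for `f`. -/
def IsCoverFam {ι : Type*} {E : Type*} [SemilatticeInf E] [OrderBot E]
    (C : Finset ι) (v : ι → E) (f : E) : Prop :=
  (∀ i ∈ C, v i ≤ f) ∧ ∀ g : E, g ≠ ⊥ → g ≤ f → ∃ i ∈ C, g ⊓ v i ≠ ⊥

/-- A character on a semilattice with zero: a multiplicative `{0,1}`-valued map sending
`0` to `0` and not identically zero. -/
def IsChar {E : Type*} [SemilatticeInf E] [OrderBot E] (φ : E → Bool) : Prop :=
  φ ⊥ = false ∧ (∀ e f : E, φ (e ⊓ f) = (φ e && φ f)) ∧ ∃ e : E, φ e = true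

/-- A tight character: a character such that, for every `f` and every cover `C` for `f`,
`φ f = max_{c ∈ C} φ c`. -/
def IsTightChar {E : Type*} [SemilatticeInf E] [OrderBot E] (φ : E → Bool) : Prop :=
  IsChar φ ∧ ∀ f : E, ∀ C : Finset E, IsCover C f → (φ f = true ↔ ∃ c ∈ C, φ c = true)

/-- A filter on a semilattice with zero. -/
def IsFilterOn {E : Type*} [SemilatticeInf E] [OrderBot E] (ξ : Set E) : Prop :=
  ξ.Nonempty ∧ ⊥ ∉ ξ ∧ (∀ e ∈ ξ, ∀ f ∈ ξ, e ⊓ f ∈ ξ) ∧ ∀ e ∈ ξ, ∀ f : E, e ≤ f → f ∈ ξ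

/-- A tight filter: whenever `C` is a cover for some `f ∈ ξ`, some element of `C` lies in `ξ`. -/
def IsTightFilter {E : Type*} [SemilatticeInf E] [OrderBot E] (ξ : Set E) : Prop :=
  IsFilterOn ξ ∧ ∀ f ∈ ξ, ∀ C : Finset E, IsCover C f → ∃ c ∈ C, c ∈ ξ

/-- The tight order: `e` is tightly below `f` iff there is no nonzero `g ≤ e` with `g ⊓ f = ⊥`. -/
def TightBelow {E : Type*} [SemilatticeInf E] [OrderBot E] (e f : E) : Prop :=
  ¬ ∃ g : E, g ≠ ⊥ ∧ g ≤ e ∧ g ⊓ f = ⊥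

/-- Tight equivalence. -/
def TightEquiv {E : Type*} [SemilatticeInf E] [OrderBot E] (e f : E) : Prop :=
  TightBelow e f ∧ TightBelow f e

/-- A homomorphism is tightly injective if it reflects tight equivalence. -/
def TightlyInjective {E F : Type*} [SemilatticeInf E] [OrderBot E] [SemilatticeInf F] [OrderBot F]
    (h : E → F) : Prop :=
  ∀ e₁ e₂ : E, TightEquiv (h e₁) (h e₂) → TightEquiv e₁ e₂

/-- A homomorphism is tightly surjective if its range is a large subset of the codomain:
for every `f` there is a finite `C ⊆ E` with `h e ≼ f` for all `e ∈ C` and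
`{f ⊓ h e : e ∈ C}` a cover for `f`. -/
def TightlySurjective {E F : Type*} [SemilatticeInf E] [OrderBot E] [SemilatticeInf F] [OrderBot F]
    (h : E → F) : Prop :=
  ∀ f : F, ∃ C : Finset E, (∀ e ∈ C, TightBelow (h e) f) ∧ IsCoverFam C (fun e => f ⊓ h e) f

/-- A homomorphism of semilattices with zero is tight if it satisfies conditions
(4.1.ii) and (4.3.ii) of the paper. -/
def IsTightHom {E F : Type*} [SemilatticeInf E] [OrderBot E] [SemilatticeInf F] [OrderBot F]
    (h : E → F) : Prop :=
  (∀ f : F, ∃ C : Finset E, IsCoverFam C (fun e => f ⊓ h e) f) ∧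
  (∀ e : E, ∀ C : Finset E, IsCover C e → IsCoverFam C h (h e))

/-- If `ψ` is an ultra-character (a tight character whose support is a
maximal filter), then the sets `D_e = {φ ∈ Ê_tight : φ e = 1}`, with `e` ranging over the
support of `ψ`, form a neighborhood basis for `ψ` in the tight spectrum. -/
theorem ultraChar_nhds_hasBasis {E : Type*} [SemilatticeInf E] [OrderBot E]
    (ψ : {φ : E → Bool // IsTightChar φ})
    (hmax : ∀ ξ : Set E, IsFilterOn ξ → {e : E | ψ.1 e = true} ⊆ ξ →
      ξ = {e : E | ψ.1 e = true}) :
    (nhds ψ).HasBasis (fun e : E => ψ.1 e = true)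
      (fun e : E => {χ : {φ : E → Bool // IsTightChar φ} | χ.1 e = true}) := by
  obtain ⟨hbot, hmul, hne⟩ := ψ.2.1
  have hmono : ∀ {a b : E}, a ≤ b → ψ.1 a = true → ψ.1 b = true := by
    intro a b hab ha
    have h := hmul a b
    rw [inf_eq_left.2 hab, ha] at h
    simpa using h.symm
  have hsep : ∀ f : E, ψ.1 f = false → ∃ c, ψ.1 c = true ∧ c ⊓ f = ⊥ := by
    intro f hf
    by_contra h
    push_neg at h
    set ξ : Set E := {g | ∃ e, ψ.1 e = true ∧ e ⊓ f ≤ g} with hξ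
    have hsub : {e : E | ψ.1 e = true} ⊆ ξ := fun e he => ⟨e, he, inf_le_left⟩
    have hfil : IsFilterOn ξ := by
      refine ⟨⟨hne.choose, hsub hne.choose_spec⟩, ?_, ?_, ?_⟩
      · rintro ⟨e, he, hle⟩
        exact h e he (le_bot_iff.1 hle)
      · rintro g₁ ⟨e₁, he₁, h₁⟩ g₂ ⟨e₂, he₂, h₂⟩
        refine ⟨e₁ ⊓ e₂, by rw [hmul, he₁, he₂]; rfl,
          le_inf ((inf_le_inf_right f inf_le_left).trans h₁)
            ((inf_le_inf_right f inf_le_right).trans h₂)⟩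
      · rintro g ⟨e, he, hle⟩ g' hgg'
        exact ⟨e, he, hle.trans hgg'⟩
    have heq := hmax ξ hfil hsub
    have hfξ : f ∈ ξ := ⟨hne.choose, hne.choose_spec, inf_le_right⟩
    rw [heq] at hfξ
    rw [Set.mem_setOf_eq, hf] at hfξ
    exact Bool.false_ne_true hfξ
  have key : ∀ F : Finset E, ∃ e, ψ.1 e = true ∧
      ∀ f ∈ F, (ψ.1 f = true → e ≤ f) ∧ (ψ.1 f = false → e ⊓ f = ⊥) := by
    intro F
    classical
    induction F using Finset.induction_on with
    | empty => exact ⟨hne.choose, hne.choose_spec, by simp⟩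
    | @insert a s hnot ih =>
      obtain ⟨e, he, hF⟩ := ih
      by_cases hfa : ψ.1 a = true
      · refine ⟨e ⊓ a, by rw [hmul, he, hfa]; rfl, ?_⟩
        intro f hf
        rcases Finset.mem_insert.1 hf with rfl | hf
        · exact ⟨fun _ => inf_le_right, fun hfalse => absurd (hfa ▸ hfalse) (by simp)⟩
        · refine ⟨fun ht => inf_le_left.trans ((hF f hf).1 ht), fun hfalse => ?_⟩
          have h1 : (e ⊓ a) ⊓ f ≤ e ⊓ f := inf_le_inf_right f inf_le_left
          rw [(hF f hf).2 hfalse] at h1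
          exact le_bot_iff.1 h1
      · have hfa' : ψ.1 a = false := by simpa using hfa
        obtain ⟨c, hc, hcf⟩ := hsep a hfa'
        refine ⟨e ⊓ c, by rw [hmul, he, hc]; rfl, ?_⟩
        intro f hf
        rcases Finset.mem_insert.1 hf with rfl | hf
        · refine ⟨fun ht => absurd (hfa' ▸ ht) (by simp), fun _ => ?_⟩
          have h1 : (e ⊓ c) ⊓ f ≤ c ⊓ f := inf_le_inf_right f inf_le_right
          rw [hcf] at h1
          exact le_bot_iff.1 h1
        · refine ⟨fun ht => inf_le_left.trans ((hF f hf).1 ht), fun hfalse => ?_⟩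
          have h1 : (e ⊓ c) ⊓ f ≤ e ⊓ f := inf_le_inf_right f inf_le_left
          rw [(hF f hf).2 hfalse] at h1
          exact le_bot_iff.1 h1
  refine Filter.hasBasis_iff.2 fun t => ⟨fun ht => ?_, ?_⟩
  · rw [nhds_induced, Filter.mem_comap] at ht
    obtain ⟨s, hs, hst⟩ := ht
    rw [nhds_pi, Filter.mem_pi] at hs
    obtain ⟨I, hIfin, u, hu, hus⟩ := hs
    obtain ⟨e, he, hF⟩ := key hIfin.toFinset
    refine ⟨e, he, fun χ hχ => ?_⟩
    replace hχ : χ.1 e = true := hχ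
    apply hst
    apply hus
    intro f hfI
    have hf := hF f (hIfin.mem_toFinset.2 hfI)
    have heq : χ.1 f = ψ.1 f := by
      cases hψf : ψ.1 f with
      | true =>
        have hle := hf.1 hψf
        have h := χ.2.1.2.1 e f
        rw [inf_eq_left.2 hle, hχ] at h
        simpa using h.symm
      | false =>
        have h := χ.2.1.2.1 e f
        rw [hf.2 hψf, χ.2.1.1, hχ] at h
        simpa using h.symm
    rw [heq]
    exact mem_of_mem_nhds (hu f)
  · rintro ⟨e, he, hsub⟩
    refine Filter.mem_of_superset ?_ hsub
    have hcont : Continuous fun χ : {φ : E → Bool // IsTightChar φ} => χ.1 e :=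
      (continuous_apply e).comp continuous_subtype_val
    have hopen : IsOpen {χ : {φ : E → Bool // IsTightChar φ} | χ.1 e = true} :=
      IsOpen.preimage hcont (isOpen_discrete ({true} : Set Bool))
    exact hopen.mem_nhds he
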